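/- For n ≥ 5, the eccentricity matrix E(W_n) of the wheel graph on n vertices satisfies det(E(W_n)) = 2^{n-2}(1−n) if n ≢ 1 (mod 3), and det(E(W_n)) = 0 if n ≡ 1 (mod 3). -/

import Mathlib

open Matrix

noncomputable section

/-- Tridiagonal matrix of order `m` with `a` on the diagonal, `b` on the superdiagonal
and `c` on the subdiagonal. -/
def tridiag {R : Type*} [Zero R] (m : ℕ) (a b c : R) : Matrix (Fin m) (Fin m) R :=
  Matrix.of fun i j =>
    if (i : ℕ) = (j : ℕ) then a
    else if (j : ℕ) = (i : ℕ) + 1 then b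
    else if (i : ℕ) = (j : ℕ) + 1 then c
    else 0

/-- The bordered matrix `[[0, e'],[e, A]]` where `e` is the all-ones vector. -/
def border {R : Type*} [Zero R] [One R] {m : ℕ} (A : Matrix (Fin m) (Fin m) R) :
    Matrix (Fin (m + 1)) (Fin (m + 1)) R :=
  Matrix.of fun i j =>
    if hi : i = 0 then (if j = 0 then 0 else 1)
    else if hj : j = 0 then 1
    else A (i.pred hi) (j.pred hj)

/-- The circulant matrix whose first row is `c`, each subsequent row the cyclic
right shift of the previous one. -/
def circ {R : Type*} {m : ℕ} (c : Fin m → R) : Matrix (Fin m) (Fin m) R :=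
  Matrix.of fun i j => c (j - i)

/-- The eccentricity matrix of the wheel graph `W_n` (hub is vertex `0`, cycle vertices
`1, …, n-1`): `E(W_n) = [[0, e'],[e, circ(0,0,2,…,2,0)]]`. -/
def EW (n : ℕ) : Matrix (Fin n) (Fin n) ℝ :=
  Matrix.of fun i j =>
    if i = j then 0
    else if (i : ℕ) = 0 ∨ (j : ℕ) = 0 then 1
    else if ((j : ℕ) : ZMod (n - 1)) - ((i : ℕ) : ZMod (n - 1)) = 1
            ∨ ((i : ℕ) : ZMod (n - 1)) - ((j : ℕ) : ZMod (n - 1)) = 1 then 0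
    else 2


namespace WheelAux

/-- circulant block of the wheel eccentricity matrix -/
def Ac (m : ℕ) : Matrix (Fin m) (Fin m) ℂ :=
  Matrix.of fun p q =>
    if ((q : ℕ) : ZMod m) = ((p : ℕ) : ZMod m)
        ∨ ((q : ℕ) : ZMod m) = ((p : ℕ) : ZMod m) + 1
        ∨ ((p : ℕ) : ZMod m) = ((q : ℕ) : ZMod m) + 1 then 0 else (2 : ℂ)

def lam (m : ℕ) (ω : ℂ) (k : ℕ) : ℂ :=
  2 * (if k % m = 0 then (m : ℂ) else 0) - 2 * (1 + ω ^ k + ω ^ ((m - 1) * k))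

variable {m : ℕ} {ω : ℂ}

lemma pow_mod (hω : IsPrimitiveRoot ω m) (a : ℕ) : ω ^ (a % m) = ω ^ a := by
  conv_rhs => rw [← Nat.div_add_mod a m]
  rw [pow_add, pow_mul, hω.pow_eq_one, one_pow, one_mul]

lemma pow_congr (hω : IsPrimitiveRoot ω m) {a b : ℕ} (h : a % m = b % m) :
    ω ^ a = ω ^ b := by
  rw [← pow_mod hω a, h, pow_mod hω b]

lemma pow_dvd_eq_one (hω : IsPrimitiveRoot ω m) {a : ℕ} (h : m ∣ a) : ω ^ a = 1 := by
  obtain ⟨t, rfl⟩ := h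
  rw [pow_mul, hω.pow_eq_one, one_pow]

lemma pow_ne_one (hm : 4 ≤ m) (hω : IsPrimitiveRoot ω m) {a : ℕ} (h0 : a ≠ 0)
    (hlt : a < m) : ω ^ a ≠ 1 := by
  intro hh
  have := hω.pow_inj hlt (by omega : 0 < m) (by simpa using hh)
  omega

lemma geom (hm : 4 ≤ m) (hω : IsPrimitiveRoot ω m) (k : ℕ) :
    ∑ q : Fin m, ω ^ ((q : ℕ) * k) = if k % m = 0 then (m : ℂ) else 0 := by
  have h1 : ∀ q : Fin m, ω ^ ((q : ℕ) * k) = (ω ^ k) ^ (q : ℕ) := fun q => by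
    rw [← pow_mul, mul_comm]
  simp_rw [h1]
  rw [Fin.sum_univ_eq_sum_range (fun i => (ω ^ k) ^ i)]
  by_cases hk : k % m = 0
  · have hd : m ∣ k := Nat.dvd_of_mod_eq_zero hk
    simp [pow_dvd_eq_one hω hd, hk]
  · have hne : ω ^ k ≠ 1 := by
      rw [← pow_mod hω]
      exact pow_ne_one hm hω hk (Nat.mod_lt _ (by omega))
    rw [geom_sum_eq hne]
    have hm1 : (ω ^ k) ^ m = 1 := by
      rw [← pow_mul, mul_comm, pow_mul, hω.pow_eq_one, one_pow]
    simp [hm1, hk]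

section Rows

variable {m : ℕ} {ω : ℂ}

/-- successor mod m -/
def psucc (hm : 4 ≤ m) (p : Fin m) : Fin m := ⟨((p : ℕ) + 1) % m, Nat.mod_lt _ (by omega)⟩

/-- predecessor mod m -/
def ppred (hm : 4 ≤ m) (p : Fin m) : Fin m := ⟨((p : ℕ) + (m - 1)) % m, Nat.mod_lt _ (by omega)⟩

lemma cast_fin_inj (hm : 4 ≤ m) {a b : Fin m} :
    ((a : ℕ) : ZMod m) = ((b : ℕ) : ZMod m) ↔ a = b := by
  constructor
  · intro hh
    have ha := ZMod.val_natCast_of_lt (a.isLt)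
    have hb := ZMod.val_natCast_of_lt (b.isLt)
    apply Fin.ext
    rw [← ha, ← hb, hh]
  · rintro rfl; rfl

lemma cast_m_sub_one (hm : 4 ≤ m) : (((m - 1 : ℕ)) : ZMod m) = -1 := by
  have h2 : (((m - 1) + 1 : ℕ) : ZMod m) = 0 := by
    rw [(by omega : m - 1 + 1 = m), ZMod.natCast_self]
  push_cast at h2
  linear_combination h2

lemma cast_psucc (hm : 4 ≤ m) (p : Fin m) :
    (((psucc hm p : Fin m) : ℕ) : ZMod m) = ((p : ℕ) : ZMod m) + 1 := by
  show ((((p : ℕ) + 1) % m : ℕ) : ZMod m) = _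
  rw [ZMod.natCast_mod]
  push_cast
  ring

lemma cast_ppred (hm : 4 ≤ m) (p : Fin m) :
    (((ppred hm p : Fin m) : ℕ) : ZMod m) = ((p : ℕ) : ZMod m) - 1 := by
  show ((((p : ℕ) + (m - 1)) % m : ℕ) : ZMod m) = _
  rw [ZMod.natCast_mod, Nat.cast_add, cast_m_sub_one hm]
  ring

lemma two_ne_zero_zmod (hm : 4 ≤ m) : ((2 : ZMod m)) ≠ 0 := by
  intro hh
  have : ((2 : ℕ) : ZMod m) = 0 := by push_cast; exact hh
  rw [ZMod.natCast_eq_zero_iff] at this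
  have := Nat.le_of_dvd (by norm_num) this
  omega

lemma one_ne_zero_zmod (hm : 4 ≤ m) : ((1 : ZMod m)) ≠ 0 := by
  intro hh
  have : ((1 : ℕ) : ZMod m) = 0 := by push_cast; exact hh
  rw [ZMod.natCast_eq_zero_iff] at this
  have := Nat.le_of_dvd (by norm_num) this
  omega

lemma row_eq (hm : 4 ≤ m) (p q : Fin m) :
    Ac m p q = 2 - (if q = p then 2 else 0) - (if q = psucc hm p then 2 else 0)
      - (if q = ppred hm p then 2 else 0) := by
  have hs : q = psucc hm p ↔ ((q : ℕ) : ZMod m) = ((p : ℕ) : ZMod m) + 1 := by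
    rw [← cast_psucc hm p, cast_fin_inj hm]
  have hp : q = ppred hm p ↔ ((p : ℕ) : ZMod m) = ((q : ℕ) : ZMod m) + 1 := by
    rw [← cast_fin_inj hm (a := q) (b := ppred hm p), cast_ppred hm p, eq_sub_iff_add_eq,
      eq_comm]
  have he : q = p ↔ ((q : ℕ) : ZMod m) = ((p : ℕ) : ZMod m) := (cast_fin_inj hm).symm
  show (if _ then (0:ℂ) else 2) = _
  by_cases h1 : q = p
  · rw [if_pos (Or.inl (he.mp h1)), if_pos h1]
    have h2 : ¬ (q = psucc hm p) := by
      rw [hs, ← he.mp h1]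
      intro hh
      exact one_ne_zero_zmod hm (by linear_combination -hh)
    have h3 : ¬ (q = ppred hm p) := by
      rw [hp, he.mp h1]
      intro hh
      exact one_ne_zero_zmod hm (by linear_combination -hh)
    rw [if_neg h2, if_neg h3]; ring
  · rw [if_neg h1]
    by_cases h2 : q = psucc hm p
    · rw [if_pos (Or.inr (Or.inl (hs.mp h2))), if_pos h2]
      have h3 : ¬ (q = ppred hm p) := by
        rw [hp]
        intro hh
        have := hs.mp h2
        exact two_ne_zero_zmod hm (by linear_combination - hh - this)
      rw [if_neg h3]; ring
    · rw [if_neg h2]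
      by_cases h3 : q = ppred hm p
      · rw [if_pos (Or.inr (Or.inr (hp.mp h3))), if_pos h3]; ring
      · have hcon : ¬(((q : ℕ) : ZMod m) = ((p : ℕ) : ZMod m)
            ∨ ((q : ℕ) : ZMod m) = ((p : ℕ) : ZMod m) + 1
            ∨ ((p : ℕ) : ZMod m) = ((q : ℕ) : ZMod m) + 1) := by
          rintro (hh | hh | hh)
          · exact h1 (he.mpr hh)
          · exact h2 (hs.mpr hh)
          · exact h3 (hp.mpr hh)
        rw [if_neg h3, if_neg hcon]
        ring

lemma rowsum (hm : 4 ≤ m) (hω : IsPrimitiveRoot ω m) (p : Fin m) (k : ℕ) :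
    ∑ q : Fin m, Ac m p q * ω ^ ((q : ℕ) * k) = ω ^ ((p : ℕ) * k) * lam m ω k := by
  have hrw : ∀ q : Fin m, Ac m p q * ω ^ ((q : ℕ) * k)
      = 2 * ω ^ ((q : ℕ) * k) - (if q = p then 2 * ω ^ ((q : ℕ) * k) else 0)
        - (if q = psucc hm p then 2 * ω ^ ((q : ℕ) * k) else 0)
        - (if q = ppred hm p then 2 * ω ^ ((q : ℕ) * k) else 0) := by
    intro q
    rw [row_eq hm p q, sub_mul, sub_mul, sub_mul]
    simp only [ite_mul, zero_mul]
  simp_rw [hrw]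
  rw [Finset.sum_sub_distrib, Finset.sum_sub_distrib, Finset.sum_sub_distrib,
    Finset.sum_ite_eq' Finset.univ p, Finset.sum_ite_eq' Finset.univ (psucc hm p),
    Finset.sum_ite_eq' Finset.univ (ppred hm p), ← Finset.mul_sum, geom hm hω k]
  simp only [Finset.mem_univ, if_true]
  have e1 : ω ^ (((psucc hm p : Fin m) : ℕ) * k) = ω ^ ((p : ℕ) * k) * ω ^ k := by
    rw [← pow_add]
    apply pow_congr hω
    show (((p : ℕ) + 1) % m) * k % m = _
    have h := (Nat.mod_modEq ((p : ℕ) + 1) m).mul_right k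
    calc (((p : ℕ) + 1) % m) * k % m = (((p : ℕ) + 1) * k) % m := h
    _ = ((p : ℕ) * k + k) % m := by ring_nf
  have e2 : ω ^ (((ppred hm p : Fin m) : ℕ) * k) = ω ^ ((p : ℕ) * k) * ω ^ ((m - 1) * k) := by
    rw [← pow_add]
    apply pow_congr hω
    show (((p : ℕ) + (m - 1)) % m) * k % m = _
    have h := (Nat.mod_modEq ((p : ℕ) + (m - 1)) m).mul_right k
    calc (((p : ℕ) + (m - 1)) % m) * k % m = (((p : ℕ) + (m - 1)) * k) % m := h
    _ = ((p : ℕ) * k + (m - 1) * k) % m := by ring_nf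
  rw [e1, e2]
  simp only [lam]
  by_cases hk : k % m = 0
  · have hd : m ∣ k := Nat.dvd_of_mod_eq_zero hk
    rw [if_pos hk, pow_dvd_eq_one hω hd, pow_dvd_eq_one hω (hd.mul_left _),
      pow_dvd_eq_one hω (hd.mul_left _)]
    ring
  · rw [if_neg hk]
    ring

end Rows

section Products

variable {m : ℕ} {ω : ℂ}

lemma split_pow (hω : IsPrimitiveRoot ω m) (hm : 4 ≤ m) (k : ℕ) :
    ω ^ ((m - 1) * k) * (1 + ω ^ k + ω ^ (2 * k)) = 1 + ω ^ k + ω ^ ((m - 1) * k) := by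
  have e1 : (m - 1) * k + k = m * k := by
    cases m with
    | zero => omega
    | succ t => simp only [Nat.succ_sub_one]; ring
  have e2 : (m - 1) * k + 2 * k = m * k + k := by
    cases m with
    | zero => omega
    | succ t => simp only [Nat.succ_sub_one]; ring
  rw [mul_add, mul_add, mul_one, ← pow_add, ← pow_add, e1, e2, pow_add,
    pow_dvd_eq_one hω ⟨k, rfl⟩, one_mul]
  ring

lemma lam_zero (hm : 4 ≤ m) (hω : IsPrimitiveRoot ω m) :
    lam m ω 0 = 2 * (m : ℂ) - 6 := by
  rw [lam, if_pos (Nat.zero_mod m)]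
  norm_num

lemma lam_third (hm : 4 ≤ m) (hω : IsPrimitiveRoot ω m) (h3 : 3 ∣ m) :
    lam m ω (m / 3) = 0 := by
  set k := m / 3 with hk
  have hk3 : 3 * k = m := Nat.mul_div_cancel' h3
  have hk0 : k ≠ 0 := by omega
  have hklt : k < m := by omega
  have hmod : k % m ≠ 0 := by rw [Nat.mod_eq_of_lt hklt]; exact hk0
  have hy : ω ^ (3 * k) = 1 := by rw [hk3]; exact hω.pow_eq_one
  have hy1 : ω ^ k ≠ 1 := pow_ne_one hm hω hk0 hklt
  have hzero : 1 + ω ^ k + ω ^ (2 * k) = 0 := by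
    have hfac : (ω ^ k - 1) * (1 + ω ^ k + ω ^ (2 * k)) = ω ^ (3 * k) - 1 := by
      have e2 : ω ^ (2 * k) = (ω ^ k) ^ 2 := by rw [← pow_mul, mul_comm]
      have e3 : ω ^ (3 * k) = (ω ^ k) ^ 3 := by rw [← pow_mul, mul_comm]
      rw [e2, e3]; ring
    rw [hy, sub_self] at hfac
    rcases mul_eq_zero.mp hfac with h | h
    · exact absurd (sub_eq_zero.mp h) hy1
    · exact h
  rw [lam, if_neg hmod, ← split_pow hω hm k, hzero, mul_zero]
  ring

lemma prod_fin_zmod [NeZero m] (hm : 4 ≤ m) (f : ℕ → ℂ) :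
    ∏ k ∈ Finset.univ.erase (0 : Fin m), f (k : ℕ)
      = ∏ z ∈ Finset.univ.erase (0 : ZMod m), f z.val := by
  haveI : NeZero m := ⟨by omega⟩
  refine Finset.prod_bij' (fun k _ => ((k : ℕ) : ZMod m))
    (fun z _ => (⟨z.val, ZMod.val_lt z⟩ : Fin m)) ?_ ?_ ?_ ?_ ?_
  · intro k hk
    rw [Finset.mem_erase] at hk ⊢
    refine ⟨?_, Finset.mem_univ _⟩
    intro hh
    rw [ZMod.natCast_eq_zero_iff] at hh
    have : (k : ℕ) = 0 := Nat.eq_zero_of_dvd_of_lt hh k.isLt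
    exact hk.1 (Fin.ext (by simpa using this))
  · intro z hz
    rw [Finset.mem_erase] at hz ⊢
    refine ⟨?_, Finset.mem_univ _⟩
    intro hh
    have : z.val = 0 := by simpa using congrArg Fin.val hh
    exact hz.1 ((ZMod.val_eq_zero z).mp this)
  · intro k _
    apply Fin.ext
    simp [ZMod.val_natCast_of_lt k.isLt]
  · intro z _
    simp [ZMod.natCast_zmod_val]
  · intro k _
    rw [ZMod.val_natCast_of_lt k.isLt]

lemma prod_mul3 [NeZero m] (hm : 4 ≤ m) (h3 : ¬ 3 ∣ m) (g : ZMod m → ℂ) :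
    ∏ z ∈ Finset.univ.erase (0 : ZMod m), g (3 * z)
      = ∏ z ∈ Finset.univ.erase (0 : ZMod m), g z := by
  haveI : NeZero m := ⟨by omega⟩
  have hcop : Nat.Coprime 3 m := (Nat.Prime.coprime_iff_not_dvd Nat.prime_three).mpr h3
  set u : (ZMod m)ˣ := ZMod.unitOfCoprime 3 hcop with hu
  have hcoe : ((u : ZMod m)) = 3 := by
    rw [hu, ZMod.coe_unitOfCoprime]
    push_cast
    ring
  refine Finset.prod_bij' (fun z _ => (3 : ZMod m) * z)
    (fun z _ => ((u⁻¹ : (ZMod m)ˣ) : ZMod m) * z) ?_ ?_ ?_ ?_ ?_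
  · intro z hz
    rw [Finset.mem_erase] at hz ⊢
    refine ⟨?_, Finset.mem_univ _⟩
    intro hh
    rw [← hcoe, Units.mul_right_eq_zero] at hh
    exact hz.1 hh
  · intro z hz
    rw [Finset.mem_erase] at hz ⊢
    refine ⟨?_, Finset.mem_univ _⟩
    intro hh
    rw [Units.mul_right_eq_zero] at hh
    exact hz.1 hh
  · intro z _
    show ((u⁻¹ : (ZMod m)ˣ) : ZMod m) * ((3 : ZMod m) * z) = z
    rw [← hcoe, ← mul_assoc, Units.inv_mul, one_mul]
  · intro z _
    show (3 : ZMod m) * (((u⁻¹ : (ZMod m)ˣ) : ZMod m) * z) = z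
    rw [← hcoe, ← mul_assoc, Units.mul_inv, one_mul]
  · intro z _
    rfl

lemma prod_cube_one [NeZero m] (hm : 4 ≤ m) (hω : IsPrimitiveRoot ω m) (h3 : ¬ 3 ∣ m) :
    ∏ k ∈ Finset.univ.erase (0 : Fin m), (1 + ω ^ (k : ℕ) + ω ^ (2 * (k : ℕ))) = 1 := by
  have hkey : (∏ k ∈ Finset.univ.erase (0 : Fin m), (1 + ω ^ (k : ℕ) + ω ^ (2 * (k : ℕ))))
      * (∏ k ∈ Finset.univ.erase (0 : Fin m), (ω ^ (k : ℕ) - 1))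
      = ∏ k ∈ Finset.univ.erase (0 : Fin m), (ω ^ (3 * (k : ℕ)) - 1) := by
    rw [← Finset.prod_mul_distrib]
    apply Finset.prod_congr rfl
    intro k _
    have e2 : ω ^ (2 * (k : ℕ)) = (ω ^ (k : ℕ)) ^ 2 := by rw [← pow_mul, mul_comm]
    have e3 : ω ^ (3 * (k : ℕ)) = (ω ^ (k : ℕ)) ^ 3 := by rw [← pow_mul, mul_comm]
    rw [e2, e3]; ring
  have hperm : ∏ k ∈ Finset.univ.erase (0 : Fin m), (ω ^ (3 * (k : ℕ)) - 1)
      = ∏ k ∈ Finset.univ.erase (0 : Fin m), (ω ^ ((k : ℕ)) - 1) := by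
    haveI : NeZero m := ⟨by omega⟩
    rw [prod_fin_zmod hm (fun a => ω ^ (3 * a) - 1), prod_fin_zmod hm (fun a => ω ^ a - 1)]
    have hcongr : ∀ z ∈ Finset.univ.erase (0 : ZMod m),
        ω ^ (3 * z.val) - 1 = (fun w : ZMod m => ω ^ w.val - 1) (3 * z) := by
      intro z _
      simp only
      congr 1
      have hz : ((3 * z.val : ℕ) : ZMod m) = 3 * z := by
        push_cast [ZMod.natCast_zmod_val]
        ring
      rw [← hz, ZMod.val_natCast]
      exact (pow_mod hω _).symm
    rw [Finset.prod_congr rfl hcongr]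
    exact prod_mul3 hm h3 (fun w : ZMod m => ω ^ w.val - 1)
  have hne : ∏ k ∈ Finset.univ.erase (0 : Fin m), (ω ^ ((k : ℕ)) - 1) ≠ 0 := by
    rw [Finset.prod_ne_zero_iff]
    intro k hk
    have hk0 : (k : ℕ) ≠ 0 := fun hh => (Finset.mem_erase.mp hk).1 (Fin.ext (by simpa using hh))
    exact sub_ne_zero.mpr (pow_ne_one hm hω hk0 k.isLt)
  exact mul_right_cancel₀ hne ((hkey.trans hperm).trans (one_mul _).symm)

lemma prod_lam [NeZero m] (hm : 4 ≤ m) (hω : IsPrimitiveRoot ω m) (h3 : ¬ 3 ∣ m) :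
    ∏ k : Fin m, lam m ω (k : ℕ) = (2 * (m : ℂ) - 6) * 2 ^ (m - 1) := by
  haveI : NeZero m := ⟨by omega⟩
  have herase : ∀ k ∈ Finset.univ.erase (0 : Fin m),
      lam m ω (k : ℕ)
        = (-2) * (ω ^ ((m - 1) * (k : ℕ)) * (1 + ω ^ (k : ℕ) + ω ^ (2 * (k : ℕ)))) := by
    intro k hk
    have hk0 : (k : ℕ) ≠ 0 := fun hh => (Finset.mem_erase.mp hk).1 (Fin.ext (by simpa using hh))
    have hmod : (k : ℕ) % m ≠ 0 := by rw [Nat.mod_eq_of_lt k.isLt]; exact hk0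
    rw [lam, if_neg hmod, split_pow hω hm]
    ring
  have hW : ∏ k ∈ Finset.univ.erase (0 : Fin m), ω ^ ((m - 1) * (k : ℕ)) = (-1) ^ (m - 1) := by
    rw [Finset.prod_erase (s := Finset.univ) (f := fun k : Fin m => ω ^ ((m - 1) * (k : ℕ)))
      (a := (0 : Fin m)) (by simp)]
    rw [Finset.prod_pow_eq_pow_sum]
    rw [← Finset.mul_sum]
    rw [Fin.sum_univ_eq_sum_range (fun i => i)]
    set S := ∑ i ∈ Finset.range m, i with hSdef
    have hGauss : S * 2 = m * (m - 1) := Finset.sum_range_id_mul_two m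
    rcases Nat.even_or_odd m with he | ho
    · obtain ⟨u, hu⟩ := he
      have hu0 : u ≠ 0 := by omega
      have huM : u < m := by omega
      have hS : S = u * (m - 1) := by
        have h2 : S * 2 = (u * (m - 1)) * 2 := by rw [hGauss, hu]; ring
        omega
      have hωu : ω ^ u = -1 := by
        have h1 : ω ^ u * ω ^ u = 1 := by rw [← pow_add, ← hu]; exact hω.pow_eq_one
        rcases mul_self_eq_one_iff.mp h1 with h | h
        · exact absurd h (pow_ne_one hm hω hu0 huM)
        · exact h
      have ho1 : Odd (m - 1) := Nat.odd_iff.mpr (by omega)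
      calc ω ^ ((m - 1) * S) = (ω ^ u) ^ ((m - 1) * (m - 1)) := by
            rw [← pow_mul]; congr 1; rw [hS]; ring
        _ = (-1 : ℂ) ^ ((m - 1) * (m - 1)) := by rw [hωu]
        _ = (-1 : ℂ) ^ (m - 1) := by rw [Odd.neg_one_pow (ho1.mul ho1), Odd.neg_one_pow ho1]
    · obtain ⟨u, hu⟩ := ho
      have hS : S = m * u := by
        have h2 : S * 2 = (m * u) * 2 := by rw [hGauss, (by omega : m - 1 = 2 * u)]; ring
        omega
      have he1 : Even (m - 1) := Nat.even_iff.mpr (by omega)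
      calc ω ^ ((m - 1) * S) = (ω ^ m) ^ ((m - 1) * u) := by
            rw [← pow_mul]; congr 1; rw [hS]; ring
        _ = 1 := by rw [hω.pow_eq_one, one_pow]
        _ = (-1 : ℂ) ^ (m - 1) := (he1.neg_one_pow).symm
  calc ∏ k : Fin m, lam m ω (k : ℕ)
      = (∏ k ∈ Finset.univ.erase (0 : Fin m), lam m ω (k : ℕ)) * lam m ω ((0 : Fin m) : ℕ) :=
        (Finset.prod_erase_mul _ _ (Finset.mem_univ _)).symm
    _ = ((-2 : ℂ) ^ (m - 1) * ((-1 : ℂ) ^ (m - 1) * 1)) * (2 * (m : ℂ) - 6) := by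
        rw [Finset.prod_congr rfl herase, Finset.prod_mul_distrib, Finset.prod_const,
          Finset.card_erase_of_mem (Finset.mem_univ _), Finset.card_univ, Fintype.card_fin,
          Finset.prod_mul_distrib, hW, prod_cube_one hm hω h3]
        rw [Fin.val_zero, lam_zero hm hω]
    _ = (2 * (m : ℂ) - 6) * 2 ^ (m - 1) := by
        rw [neg_pow]
        have h11 : ((-1 : ℂ)) ^ (m - 1) * ((-1 : ℂ)) ^ (m - 1) = 1 := by
          rw [← pow_add]; exact Even.neg_one_pow ⟨m - 1, rfl⟩
        linear_combination ((2 * (m : ℂ) - 6) * 2 ^ (m - 1)) * h11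

lemma det_Ac (hm : 4 ≤ m) (hω : IsPrimitiveRoot ω m) :
    (Ac m).det = ∏ k : Fin m, lam m ω (k : ℕ) := by
  set V : Matrix (Fin m) (Fin m) ℂ := Matrix.vandermonde (fun q : Fin m => ω ^ (q : ℕ)) with hV
  have hVapp : ∀ q k : Fin m, V q k = ω ^ ((q : ℕ) * (k : ℕ)) := by
    intro q k
    rw [hV, Matrix.vandermonde_apply, ← pow_mul]
  have hAV : Ac m * V = V * Matrix.diagonal (fun k : Fin m => lam m ω (k : ℕ)) := by
    ext p k
    rw [Matrix.mul_apply, Matrix.mul_diagonal, hVapp p k]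
    simp_rw [hVapp]
    exact rowsum hm hω p (k : ℕ)
  have hdV : V.det ≠ 0 := by
    rw [hV, Matrix.det_vandermonde_ne_zero_iff]
    intro a b hab
    exact Fin.ext (hω.pow_inj a.isLt b.isLt hab)
  have hdet := congrArg Matrix.det hAV
  rw [Matrix.det_mul, Matrix.det_mul, Matrix.det_diagonal] at hdet
  exact mul_right_cancel₀ hdV (by linear_combination hdet)

end Products

section Assemble

variable {m : ℕ} {ω : ℂ}

lemma det_blocks (hm : 4 ≤ m) (hω : IsPrimitiveRoot ω m) (h3 : ¬ 3 ∣ m) :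
    (Matrix.fromBlocks (0 : Matrix (Fin 1) (Fin 1) ℂ) (Matrix.of fun _ _ => (1 : ℂ))
      (Matrix.of fun _ _ => (1 : ℂ)) (Ac m)).det = -(m : ℂ) * 2 ^ (m - 1) := by
  haveI : NeZero m := ⟨by omega⟩
  have hc : (2 * (m : ℂ) - 6) ≠ 0 := by
    intro hh
    have h1 : ((m : ℕ) : ℂ) = ((3 : ℕ) : ℂ) := by push_cast; linear_combination hh / 2
    have h2 : m = 3 := Nat.cast_injective h1
    omega
  have hdA : (Ac m).det = (2 * (m : ℂ) - 6) * 2 ^ (m - 1) := by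
    rw [det_Ac hm hω, prod_lam hm hω h3]
  have hdA0 : (Ac m).det ≠ 0 := by
    rw [hdA]; exact mul_ne_zero hc (pow_ne_zero _ two_ne_zero)
  haveI : Invertible (Ac m) := Matrix.invertibleOfIsUnitDet _ (isUnit_iff_ne_zero.mpr hdA0)
  rw [Matrix.det_fromBlocks₂₂, Matrix.det_fin_one]
  set B : Matrix (Fin 1) (Fin m) ℂ := Matrix.of fun _ _ => 1 with hB
  set C : Matrix (Fin m) (Fin 1) ℂ := Matrix.of fun _ _ => 1 with hC
  have hAC : Ac m * C = (2 * (m : ℂ) - 6) • C := by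
    ext p x
    rw [Matrix.mul_apply, Matrix.smul_apply]
    have hpt : ∀ q : Fin m, Ac m p q * C q x = Ac m p q * ω ^ ((q : ℕ) * 0) := by
      intro q; simp [hC]
    rw [Finset.sum_congr rfl (fun q _ => hpt q), rowsum hm hω p 0, lam_zero hm hω]
    simp [hC]
  have hIC : (⅟(Ac m)) * C = (2 * (m : ℂ) - 6)⁻¹ • C := by
    have h1 : (⅟(Ac m)) * (Ac m * C) = C := by
      rw [← Matrix.mul_assoc, invOf_mul_self, Matrix.one_mul]
    rw [hAC, Matrix.mul_smul] at h1
    exact ((inv_smul_eq_iff₀ hc).mpr h1.symm).symm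
  have hentry : ((0 - B * ⅟(Ac m) * C) : Matrix (Fin 1) (Fin 1) ℂ) 0 0
      = -((m : ℂ) * (2 * (m : ℂ) - 6)⁻¹) := by
    rw [Matrix.sub_apply, Matrix.zero_apply, Matrix.mul_assoc, hIC]
    simp [hB, hC, Matrix.mul_apply, Finset.sum_const, Finset.card_univ]
  rw [hentry, hdA]
  field_simp

lemma det_blocks_zero (hm : 4 ≤ m) (hω : IsPrimitiveRoot ω m) (h3 : 3 ∣ m) :
    (Matrix.fromBlocks (0 : Matrix (Fin 1) (Fin 1) ℂ) (Matrix.of fun _ _ => (1 : ℂ))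
      (Matrix.of fun _ _ => (1 : ℂ)) (Ac m)).det = 0 := by
  haveI : NeZero m := ⟨by omega⟩
  rw [← Matrix.exists_mulVec_eq_zero_iff]
  set k : ℕ := m / 3 with hk
  have hk0 : k ≠ 0 := by omega
  have hklt : k < m := by omega
  refine ⟨Sum.elim (0 : Fin 1 → ℂ) (fun q : Fin m => ω ^ ((q : ℕ) * k)), ?_, ?_⟩
  · intro hh
    have h1 := congrFun hh (Sum.inr (⟨0, by omega⟩ : Fin m))
    simp at h1
  · rw [Matrix.fromBlocks_mulVec]
    funext x
    cases x with
    | inl x =>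
      have hgeom := geom hm hω k
      rw [if_neg (by rw [Nat.mod_eq_of_lt hklt]; exact hk0)] at hgeom
      simp only [Sum.elim_inl, Sum.elim_comp_inl, Sum.elim_comp_inr, Matrix.zero_mulVec,
        Matrix.mulVec_zero, Pi.add_apply, Pi.zero_apply, zero_add]
      simp only [Matrix.mulVec, dotProduct, Matrix.of_apply, one_mul,
        Sum.elim_comp_inl, Sum.elim_comp_inr, Pi.zero_apply, mul_zero,
        Finset.sum_const_zero, zero_add]
      exact hgeom
    | inr p =>
      have hlam := lam_third hm hω h3
      rw [← hk] at hlam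
      simp only [Sum.elim_inr, Sum.elim_comp_inl, Sum.elim_comp_inr, Matrix.zero_mulVec,
        Matrix.mulVec_zero, Pi.add_apply, Pi.zero_apply, zero_add]
      simp only [Matrix.mulVec, dotProduct, Matrix.of_apply, one_mul,
        Sum.elim_comp_inl, Sum.elim_comp_inr, Pi.zero_apply, mul_zero,
        Finset.sum_const_zero, zero_add]
      rw [rowsum hm hω p k, hlam, mul_zero]

lemma EW_block (hm : 4 ≤ m) :
    (EW (m + 1)).map (Complex.ofRealHom)
      = (Matrix.fromBlocks (0 : Matrix (Fin 1) (Fin 1) ℂ) (Matrix.of fun _ _ => (1 : ℂ))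
          (Matrix.of fun _ _ => (1 : ℂ)) (Ac m)).submatrix
          ((finSumFinEquiv.trans (finCongr (by omega : 1 + m = m + 1))).symm)
          ((finSumFinEquiv.trans (finCongr (by omega : 1 + m = m + 1))).symm) := by
  haveI : NeZero m := ⟨by omega⟩
  set e := finSumFinEquiv.trans (finCongr (by omega : 1 + m = m + 1)) with he
  have hv1 : ∀ x : Fin 1, ((e (Sum.inl x)) : ℕ) = 0 := by
    intro x
    have hx : x = 0 := Subsingleton.elim _ _
    subst hx
    simp [he]
  have hv2 : ∀ p : Fin m, ((e (Sum.inr p)) : ℕ) = 1 + (p : ℕ) := by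
    intro p
    simp [he]
    omega
  ext i j
  obtain ⟨a, rfl⟩ : ∃ a, e a = i := ⟨e.symm i, e.apply_symm_apply i⟩
  obtain ⟨b, rfl⟩ : ∃ b, e b = j := ⟨e.symm j, e.apply_symm_apply j⟩
  rw [Matrix.submatrix_apply, Equiv.symm_apply_apply, Equiv.symm_apply_apply,
    Matrix.map_apply]
  cases a with
  | inl x => cases b with
    | inl y =>
      have hxy : e (Sum.inl x) = e (Sum.inl y) := by
        have : x = y := Subsingleton.elim _ _
        rw [this]
      simp only [EW, Matrix.of_apply, Matrix.fromBlocks_apply₁₁, Matrix.zero_apply]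
      rw [if_pos hxy, map_zero]
    | inr q =>
      have hne : e (Sum.inl x) ≠ e (Sum.inr q) := by
        intro hh
        have h1 := congrArg Fin.val hh
        rw [hv1, hv2] at h1
        omega
      simp only [EW, Matrix.of_apply, Matrix.fromBlocks_apply₁₂]
      rw [if_neg hne, if_pos (Or.inl (hv1 x)), _root_.map_one]
  | inr p =>
    cases b with
    | inl y =>
      have hne : e (Sum.inr p) ≠ e (Sum.inl y) := by
        intro hh
        have h1 := congrArg Fin.val hh
        rw [hv1, hv2] at h1
        omega
      simp only [EW, Matrix.of_apply, Matrix.fromBlocks_apply₂₁]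
      rw [if_neg hne, if_pos (Or.inr (hv1 y)), _root_.map_one]
    | inr q =>
      have hij : (e (Sum.inr p) = e (Sum.inr q)) ↔ p = q := by
        constructor
        · intro hh; exact Sum.inr_injective (e.injective hh)
        · rintro rfl; rfl
      have hcond1 : (((e (Sum.inr q) : Fin (m+1)) : ℕ) : ZMod (m + 1 - 1))
            - (((e (Sum.inr p) : Fin (m+1)) : ℕ) : ZMod (m + 1 - 1)) = 1
          ↔ ((q : ℕ) : ZMod m) = ((p : ℕ) : ZMod m) + 1 := by
        show (((e (Sum.inr q) : Fin (m+1)) : ℕ) : ZMod m)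
            - (((e (Sum.inr p) : Fin (m+1)) : ℕ) : ZMod m) = 1 ↔ _
        rw [hv2, hv2]
        push_cast
        constructor
        · intro hh; linear_combination hh
        · intro hh; linear_combination hh
      have hcond2 : (((e (Sum.inr p) : Fin (m+1)) : ℕ) : ZMod (m + 1 - 1))
            - (((e (Sum.inr q) : Fin (m+1)) : ℕ) : ZMod (m + 1 - 1)) = 1
          ↔ ((p : ℕ) : ZMod m) = ((q : ℕ) : ZMod m) + 1 := by
        show (((e (Sum.inr p) : Fin (m+1)) : ℕ) : ZMod m)
            - (((e (Sum.inr q) : Fin (m+1)) : ℕ) : ZMod m) = 1 ↔ _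
        rw [hv2, hv2]
        push_cast
        constructor
        · intro hh; linear_combination hh
        · intro hh; linear_combination hh
      simp only [EW, Matrix.of_apply, Matrix.fromBlocks_apply₂₂, Ac]
      by_cases h1 : ((q : ℕ) : ZMod m) = ((p : ℕ) : ZMod m)
      · have hpq : p = q := ((cast_fin_inj hm).mp h1).symm
        rw [if_pos (hij.mpr hpq), if_pos (Or.inl h1), map_zero]
      · have hne : e (Sum.inr p) ≠ e (Sum.inr q) := by
          intro hh
          exact h1 ((cast_fin_inj hm).mpr (hij.mp hh).symm)
        have hzero : ¬(((e (Sum.inr p) : Fin (m+1)) : ℕ) = 0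
            ∨ ((e (Sum.inr q) : Fin (m+1)) : ℕ) = 0) := by
          rw [hv2, hv2]; omega
        rw [if_neg hne, if_neg hzero, if_congr (or_congr hcond1 hcond2) rfl rfl]
        by_cases h2 : ((q : ℕ) : ZMod m) = ((p : ℕ) : ZMod m) + 1
            ∨ ((p : ℕ) : ZMod m) = ((q : ℕ) : ZMod m) + 1
        · rw [if_pos h2, if_pos (Or.inr h2), map_zero]
        · rw [if_neg h2, if_neg (by
            rintro (hh | hh | hh)
            · exact h1 hh
            · exact h2 (Or.inl hh)
            · exact h2 (Or.inr hh))]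
          simp

end Assemble

end WheelAux

theorem stmt4 (n : ℕ) (h : 5 ≤ n) :
    (EW n).det = if n % 3 = 1 then 0 else 2 ^ (n - 2) * (1 - (n : ℝ)) := by
  obtain ⟨m, rfl⟩ : ∃ m, n = m + 1 := ⟨n - 1, by omega⟩
  have hm : 4 ≤ m := by omega
  haveI : NeZero m := ⟨by omega⟩
  have hω := Complex.isPrimitiveRoot_exp m (by omega)
  set ω : ℂ := Complex.exp (2 * Real.pi * Complex.I / m) with hωdef
  set Mb := Matrix.fromBlocks (0 : Matrix (Fin 1) (Fin 1) ℂ) (Matrix.of fun _ _ => (1 : ℂ))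
    (Matrix.of fun _ _ => (1 : ℂ)) (WheelAux.Ac m) with hMb
  have hdet : (Complex.ofRealHom ((EW (m + 1)).det)) = Mb.det := by
    rw [RingHom.map_det, RingHom.mapMatrix_apply, WheelAux.EW_block hm, hMb,
      Matrix.det_submatrix_equiv_self]
  by_cases h3 : 3 ∣ m
  · rw [if_pos (by omega : (m + 1) % 3 = 1)]
    have h0 : Mb.det = 0 := WheelAux.det_blocks_zero hm hω h3
    have h1 : Complex.ofRealHom ((EW (m + 1)).det) = 0 := by rw [hdet, h0]
    rw [Complex.ofRealHom_eq_coe] at h1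
    exact_mod_cast h1
  · rw [if_neg (by omega : ¬ (m + 1) % 3 = 1)]
    have h0 : Mb.det = -(m : ℂ) * 2 ^ (m - 1) := WheelAux.det_blocks hm hω h3
    have h1 : Complex.ofRealHom ((EW (m + 1)).det)
        = Complex.ofRealHom ((2 : ℝ) ^ ((m + 1) - 2) * (1 - ((m + 1 : ℕ) : ℝ))) := by
      rw [hdet, h0, (by omega : (m + 1) - 2 = m - 1)]
      simp only [Complex.ofRealHom_eq_coe, Complex.ofReal_mul, Complex.ofReal_pow,
        Complex.ofReal_sub, Complex.ofReal_one, Complex.ofReal_natCast,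
        Complex.ofReal_ofNat]
      push_cast
      ring
    rw [Complex.ofRealHom_eq_coe, Complex.ofRealHom_eq_coe] at h1
    exact Complex.ofReal_injective h1
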